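/- Let A be a real m×n matrix, let x, s ∈ ℝⁿ have all components positive, μ = xᵀs/n, and let D be the diagonal matrix with D_ii = √(x_i/s_i). Let ν ≥ 0, let x⁰, s⁰, x̄, s̄ ∈ ℝⁿ and λ⁰, λ̄ ∈ ℝᵐ, and suppose for i = 1, 2, 3 the triples (δxⁱ, δλⁱ, δsⁱ) satisfy A δxⁱ = 0, Aᵀ δλⁱ + δsⁱ = 0, with s ∘ δx¹ + x ∘ δs¹ = x ∘ s, s ∘ δx² + x ∘ δs² = −ν · s ∘ (x⁰ − x̄), and s ∘ δx³ + x ∘ δs³ = −ν · x ∘ (s⁰ − s̄). If ẋ = δx¹ + δx² + δx³ + ν (x⁰ − x̄) and ṡ = δs¹ + δs² + δs³ + ν (s⁰ − s̄), then ‖D ṡ‖ ≤ √(n μ) + ‖D δs²‖ + ‖D⁻¹ δx³‖ and ‖D⁻¹ ẋ‖ ≤ √(n μ) + ‖D δs²‖ + ‖D⁻¹ δx³‖. -/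

import Mathlib

open Matrix

/-- The Euclidean norm of a vector in `ℝⁿ`. -/
noncomputable def euclNorm {n : ℕ} (v : Fin n → ℝ) : ℝ :=
  Real.sqrt (∑ i, v i ^ 2)

/-- `D⁻¹ v`, where `D = diag(√(x_i/s_i))`. -/
noncomputable def dInvApp {n : ℕ} (x s v : Fin n → ℝ) : Fin n → ℝ :=
  fun i => Real.sqrt (s i / x i) * v i

/-- `D v`, where `D = diag(√(x_i/s_i))`. -/
noncomputable def dApp {n : ℕ} (x s v : Fin n → ℝ) : Fin n → ℝ :=
  fun i => Real.sqrt (x i / s i) * v i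

lemma euclNorm_eq' {n : ℕ} (v : Fin n → ℝ) :
    euclNorm v = ‖(WithLp.equiv 2 (Fin n → ℝ)).symm v‖ := by
  rw [euclNorm, EuclideanSpace.norm_eq]
  congr 1
  refine Finset.sum_congr rfl fun i _ => ?_
  rw [Real.norm_eq_abs, sq_abs]
  rfl

lemma inner_emb {n : ℕ} (a b : Fin n → ℝ) :
    @inner ℝ _ _ ((WithLp.equiv 2 (Fin n → ℝ)).symm a) ((WithLp.equiv 2 (Fin n → ℝ)).symm b)
      = ∑ i, a i * b i := by
  simp [PiLp.inner_apply, RCLike.inner_apply, conj_trivial]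
  exact Finset.sum_congr rfl fun i _ => mul_comm _ _

/-- Lemma 4.3: three-term splitting bound on the Newton direction
`‖Dṡ‖, ‖D⁻¹ẋ‖ ≤ √(nμ) + ‖Dδs²‖ + ‖D⁻¹δx³‖`. -/
theorem newton_direction_splitting_bound {m n : ℕ}
    (A : Matrix (Fin m) (Fin n) ℝ)
    (x s : Fin n → ℝ) (hx : ∀ i, 0 < x i) (hs : ∀ i, 0 < s i)
    (μ ν : ℝ) (hμ : μ = x ⬝ᵥ s / n) (hν : 0 ≤ ν)
    (x0 s0 xbar sbar : Fin n → ℝ) (l0 lbar : Fin m → ℝ)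
    (dx1 dx2 dx3 ds1 ds2 ds3 : Fin n → ℝ) (dl1 dl2 dl3 : Fin m → ℝ)
    (hA1 : A.mulVec dx1 = 0) (hA2 : A.mulVec dx2 = 0) (hA3 : A.mulVec dx3 = 0)
    (hB1 : Aᵀ.mulVec dl1 + ds1 = 0) (hB2 : Aᵀ.mulVec dl2 + ds2 = 0)
    (hB3 : Aᵀ.mulVec dl3 + ds3 = 0)
    (hr1 : ∀ i, s i * dx1 i + x i * ds1 i = x i * s i)
    (hr2 : ∀ i, s i * dx2 i + x i * ds2 i = -(ν * (s i * (x0 i - xbar i))))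
    (hr3 : ∀ i, s i * dx3 i + x i * ds3 i = -(ν * (x i * (s0 i - sbar i))))
    (xd sd : Fin n → ℝ)
    (hxd : xd = dx1 + dx2 + dx3 + ν • (x0 - xbar))
    (hsd : sd = ds1 + ds2 + ds3 + ν • (s0 - sbar)) :
    euclNorm (dApp x s sd) ≤
      Real.sqrt (n * μ) + euclNorm (dApp x s ds2) + euclNorm (dInvApp x s dx3) ∧
    euclNorm (dInvApp x s xd) ≤
      Real.sqrt (n * μ) + euclNorm (dApp x s ds2) + euclNorm (dInvApp x s dx3) := by
  classical
  set emb : (Fin n → ℝ) → EuclideanSpace ℝ (Fin n) :=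
    fun v => (WithLp.equiv 2 (Fin n → ℝ)).symm v with hemb
  have hax : ∀ i, (0:ℝ) < Real.sqrt (x i) := fun i => Real.sqrt_pos.2 (hx i)
  have hbs : ∀ i, (0:ℝ) < Real.sqrt (s i) := fun i => Real.sqrt_pos.2 (hs i)
  have hsqx : ∀ i, Real.sqrt (x i) ^ 2 = x i := fun i => Real.sq_sqrt (hx i).le
  have hsqs : ∀ i, Real.sqrt (s i) ^ 2 = s i := fun i => Real.sq_sqrt (hs i).le
  have hdsx : ∀ i, Real.sqrt (s i / x i) = Real.sqrt (s i) / Real.sqrt (x i) :=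
    fun i => Real.sqrt_div (hs i).le _
  have hdxs : ∀ i, Real.sqrt (x i / s i) = Real.sqrt (x i) / Real.sqrt (s i) :=
    fun i => Real.sqrt_div (hx i).le _
  have hmul : ∀ i, Real.sqrt (x i * s i) = Real.sqrt (x i) * Real.sqrt (s i) :=
    fun i => Real.sqrt_mul (hx i).le _
  -- orthogonality of dx1 and ds1
  have horth : ∑ i, dx1 i * ds1 i = 0 := by
    have hds : ds1 = -(Aᵀ.mulVec dl1) := eq_neg_of_add_eq_zero_right hB1
    have : dx1 ⬝ᵥ ds1 = 0 := by
      rw [hds, dotProduct_neg, dotProduct_mulVec, vecMul_transpose, hA1, zero_dotProduct,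
        neg_zero]
    simpa [dotProduct] using this
  set P := emb (dInvApp x s dx1) with hP
  set Q := emb (dApp x s ds1) with hQ
  set R2 := emb (dApp x s ds2) with hR2
  set R3 := emb (dInvApp x s dx3) with hR3
  -- P + Q = (√(x_i s_i))_i
  have hPQ : P + Q = emb (fun i => Real.sqrt (x i * s i)) := by
    ext i
    show dInvApp x s dx1 i + dApp x s ds1 i = Real.sqrt (x i * s i)
    have h1 := hr1 i
    have hx2 := hsqx i; have hs2 := hsqs i
    have hxne : Real.sqrt (x i) ≠ 0 := (hax i).ne'
    have hsne : Real.sqrt (s i) ≠ 0 := (hbs i).ne'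
    rw [← hx2, ← hs2] at h1
    simp only [dInvApp, dApp, hdsx i, hdxs i, hmul i]
    field_simp
    linear_combination h1
  -- inner P Q = 0
  have hinner : @inner ℝ _ _ P Q = 0 := by
    rw [hP, hQ, hemb, inner_emb]
    rw [← horth]
    refine Finset.sum_congr rfl fun i _ => ?_
    have hxne : Real.sqrt (x i) ≠ 0 := (hax i).ne'
    have hsne : Real.sqrt (s i) ≠ 0 := (hbs i).ne'
    simp only [dInvApp, dApp, hdsx i, hdxs i]
    field_simp
  -- ‖P+Q‖² = n μ
  have hnormPQ : ‖P + Q‖ ^ 2 = n * μ := by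
    have h1 : ‖P + Q‖ ^ 2 = ∑ i, Real.sqrt (x i * s i) ^ 2 := by
      rw [hPQ]
      rw [show ‖emb (fun i => Real.sqrt (x i * s i))‖
          = euclNorm (fun i => Real.sqrt (x i * s i)) from (euclNorm_eq' _).symm]
      rw [euclNorm, Real.sq_sqrt (Finset.sum_nonneg fun i _ => sq_nonneg _)]
    have h2 : ∑ i, Real.sqrt (x i * s i) ^ 2 = x ⬝ᵥ s := by
      simp only [dotProduct]
      exact Finset.sum_congr rfl fun i _ => Real.sq_sqrt (mul_nonneg (hx i).le (hs i).le)
    rw [h1, h2, hμ]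
    rcases Nat.eq_zero_or_pos n with hn | hn
    · subst hn; simp [dotProduct]
    · field_simp
  have hnμ : (0:ℝ) ≤ n * μ := by rw [← hnormPQ]; positivity
  -- Pythagoras
  have hpyth : ‖P‖ ^ 2 + ‖Q‖ ^ 2 = n * μ := by
    rw [← hnormPQ, norm_add_sq_real, hinner]; ring
  have hQle : ‖Q‖ ≤ Real.sqrt (n * μ) := by
    rw [show ‖Q‖ = Real.sqrt (‖Q‖ ^ 2) from (Real.sqrt_sq (norm_nonneg _)).symm]
    exact Real.sqrt_le_sqrt (by nlinarith [sq_nonneg ‖P‖])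
  have hPle : ‖P‖ ≤ Real.sqrt (n * μ) := by
    rw [show ‖P‖ = Real.sqrt (‖P‖ ^ 2) from (Real.sqrt_sq (norm_nonneg _)).symm]
    exact Real.sqrt_le_sqrt (by nlinarith [sq_nonneg ‖Q‖])
  -- decompositions
  have hsddec : emb (dApp x s sd) = Q + R2 + (-R3) := by
    ext i
    show dApp x s sd i = dApp x s ds1 i + dApp x s ds2 i + -(dInvApp x s dx3 i)
    have h3 := hr3 i
    simp only [hsd, dApp, dInvApp, hdsx i, hdxs i, Pi.add_apply, Pi.smul_apply, Pi.sub_apply,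
      smul_eq_mul]
    have hx2 := hsqx i; have hs2 := hsqs i
    have hxne : Real.sqrt (x i) ≠ 0 := (hax i).ne'
    have hsne : Real.sqrt (s i) ≠ 0 := (hbs i).ne'
    rw [← hx2, ← hs2] at h3
    field_simp
    linear_combination h3
  have hxddec : emb (dInvApp x s xd) = P + (-R2) + R3 := by
    ext i
    show dInvApp x s xd i = dInvApp x s dx1 i + -(dApp x s ds2 i) + dInvApp x s dx3 i
    have h2 := hr2 i
    simp only [hxd, dApp, dInvApp, hdsx i, hdxs i, Pi.add_apply, Pi.smul_apply, Pi.sub_apply,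
      smul_eq_mul]
    have hx2 := hsqx i; have hs2 := hsqs i
    have hxne : Real.sqrt (x i) ≠ 0 := (hax i).ne'
    have hsne : Real.sqrt (s i) ≠ 0 := (hbs i).ne'
    rw [← hx2, ← hs2] at h2
    field_simp
    linear_combination h2
  constructor
  · calc euclNorm (dApp x s sd) = ‖Q + R2 + (-R3)‖ := by
          rw [euclNorm_eq']; exact congrArg norm hsddec
    _ ≤ ‖Q‖ + ‖R2‖ + ‖-R3‖ := norm_add₃_le
    _ = ‖Q‖ + ‖R2‖ + ‖R3‖ := by rw [norm_neg]
    _ ≤ Real.sqrt (n * μ) + euclNorm (dApp x s ds2) + euclNorm (dInvApp x s dx3) := by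
          rw [euclNorm_eq', euclNorm_eq']
          exact add_le_add (add_le_add hQle le_rfl) le_rfl
  · calc euclNorm (dInvApp x s xd) = ‖P + (-R2) + R3‖ := by
          rw [euclNorm_eq']; exact congrArg norm hxddec
    _ ≤ ‖P‖ + ‖-R2‖ + ‖R3‖ := norm_add₃_le
    _ = ‖P‖ + ‖R2‖ + ‖R3‖ := by rw [norm_neg]
    _ ≤ Real.sqrt (n * μ) + euclNorm (dApp x s ds2) + euclNorm (dInvApp x s dx3) := by
          rw [euclNorm_eq', euclNorm_eq']
          exact add_le_add (add_le_add hPle le_rfl) le_rfl
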